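/- (Submultiplicativity of Gevrey quasi-norms, inequality (3.25)) Fix s > 1, h ∈ (0,1], T > 0 and n ≥ 2. For m, k ∈ ℝ and a smooth a : ℝ^n × ℝ^{n−1} → ℂ define the Gevrey quasi-norm N̄_{m,k}(a,T) = sup_{(x,ξ')} Σ_{α,β} |∂_x^α ∂_{ξ'}^β a(x,ξ')| T^{|α|+|β|} h^{m} ⟨ξ'⟩^{|β|−k} / ((α!)^s (β!)^s), where ⟨ξ'⟩ = (1+|ξ'|²)^{1/2} and the sum runs over all multi-indices α ∈ ℕ^n, β ∈ ℕ^{n−1}. Then for all m, k, m', k' ∈ ℝ and all smooth a, a' : ℝ^n × ℝ^{n−1} → ℂ one has N̄_{m+m', k+k'}(a·a', T) ≤ N̄_{m,k}(a,T) · N̄_{m',k'}(a',T). -/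

import Mathlib

open scoped BigOperators Real ENNReal NNReal
open MeasureTheory

noncomputable section

variable {n m : ℕ} {E : Type*} [NormedAddCommGroup E] [NormedSpace ℝ E]

/-- Partial derivative in the `i`-th coordinate of the first factor. -/
def pdx (i : Fin n) (f : (Fin n → ℝ) × (Fin m → ℝ) → E) :
    (Fin n → ℝ) × (Fin m → ℝ) → E :=
  fun p => fderiv ℝ f p (Pi.single i 1, 0)

/-- Partial derivative in the `j`-th coordinate of the second factor. -/
def pdy (j : Fin m) (f : (Fin n → ℝ) × (Fin m → ℝ) → E) :
    (Fin n → ℝ) × (Fin m → ℝ) → E :=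
  fun p => fderiv ℝ f p (0, Pi.single j 1)

/-- Iterated partial derivative ∂_x^α in the first factor. -/
def mdx (α : Fin n → ℕ) (f : (Fin n → ℝ) × (Fin m → ℝ) → E) :
    (Fin n → ℝ) × (Fin m → ℝ) → E :=
  (List.finRange n).foldr (fun i g => (pdx i)^[α i] g) f

/-- Iterated partial derivative ∂_y^β in the second factor. -/
def mdy (β : Fin m → ℕ) (f : (Fin n → ℝ) × (Fin m → ℝ) → E) :
    (Fin n → ℝ) × (Fin m → ℝ) → E :=
  (List.finRange m).foldr (fun j g => (pdy j)^[β j] g) f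

/-- Partial derivative on a single Euclidean factor. -/
def pd {d : ℕ} (i : Fin d) (f : (Fin d → ℝ) → E) : (Fin d → ℝ) → E :=
  fun x => fderiv ℝ f x (Pi.single i 1)

/-- Iterated partial derivative ∂^α on a single Euclidean factor. -/
def md {d : ℕ} (α : Fin d → ℕ) (f : (Fin d → ℝ) → E) : (Fin d → ℝ) → E :=
  (List.finRange d).foldr (fun i g => (pd i)^[α i] g) f

/-- Multi-index factorial `α!`. -/
def mfact {d : ℕ} (α : Fin d → ℕ) : ℕ := ∏ i, (α i).factorial

/-- Multi-index length `|α|`. -/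
def msize {d : ℕ} (α : Fin d → ℕ) : ℕ := ∑ i, α i

/-- The Gevrey quasi-norm
`N̄_{m,k}(a,T) = sup_{(x,ξ')} Σ_{α,β} |∂_x^α ∂_{ξ'}^β a| T^{|α|+|β|} h^m ⟨ξ'⟩^{|β|-k} / (α!^s β!^s)`,
with values in `[0,∞]`. -/
def qnorm (n : ℕ) (s h T m k : ℝ)
    (a : (Fin n → ℝ) × (Fin (n-1) → ℝ) → ℂ) : ℝ≥0∞ :=
  ⨆ p : (Fin n → ℝ) × (Fin (n-1) → ℝ),
    ∑' (α : Fin n → ℕ) (β : Fin (n-1) → ℕ),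
      ENNReal.ofReal (‖mdx α (mdy β a) p‖ * T ^ (msize α + msize β) * h ^ m *
        (Real.sqrt (1 + ∑ i, (p.2 i) ^ 2)) ^ ((msize β : ℝ) - k) /
        ((mfact α * mfact β : ℕ) : ℝ) ^ s)


/-! ### Auxiliary machinery: directional derivatives and the multi-index Leibniz rule -/

section Aux
open Function Finset
variable {F : Type*} [NormedAddCommGroup F] [NormedSpace ℝ F]

/-- Derivative in direction `v`. -/
def pdv (v : F) (f : F → E) : F → E := fun p => fderiv ℝ f p v

theorem smooth_pdv {f : F → E} (hf : ContDiff ℝ (⊤:ℕ∞) f) (v : F) : ContDiff ℝ (⊤:ℕ∞) (pdv v f) :=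
  (hf.fderiv_right (by exact_mod_cast le_top)).clm_apply contDiff_const

theorem smooth_pdv_iter {f : F → E} (hf : ContDiff ℝ (⊤:ℕ∞) f) (v : F) (N : ℕ) :
    ContDiff ℝ (⊤:ℕ∞) ((pdv v)^[N] f) := by
  induction N generalizing f with
  | zero => exact hf
  | succ N ih => rw [Function.iterate_succ_apply]; exact ih (smooth_pdv hf v)

theorem diffAt {f : F → E} (hf : ContDiff ℝ (⊤:ℕ∞) f) (p : F) : DifferentiableAt ℝ f p :=
  (hf.differentiable (by simp)).differentiableAt

theorem pdv_add {f g : F → E} (hf : ContDiff ℝ (⊤:ℕ∞) f) (hg : ContDiff ℝ (⊤:ℕ∞) g) (v : F) :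
    pdv v (fun p => f p + g p) = fun p => pdv v f p + pdv v g p := by
  funext p
  simp only [pdv, fderiv_fun_add (diffAt hf p) (diffAt hg p), ContinuousLinearMap.add_apply]

theorem pdv_const_mul {f : F → ℂ} (hf : ContDiff ℝ (⊤:ℕ∞) f) (c : ℂ) (v : F) :
    pdv v (fun p => c * f p) = fun p => c * pdv v f p := by
  funext p
  simp only [pdv, fderiv_const_mul (diffAt hf p) c, ContinuousLinearMap.smul_apply, smul_eq_mul]

theorem pdv_mul {f g : F → ℂ} (hf : ContDiff ℝ (⊤:ℕ∞) f) (hg : ContDiff ℝ (⊤:ℕ∞) g) (v : F) :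
    pdv v (fun p => f p * g p) = fun p => pdv v f p * g p + f p * pdv v g p := by
  funext p
  simp only [pdv, fderiv_fun_mul (diffAt hf p) (diffAt hg p), ContinuousLinearMap.add_apply,
    ContinuousLinearMap.smul_apply, smul_eq_mul]
  ring

theorem pdv_sum {ι : Type*} (s : Finset ι) {f : ι → F → E}
    (hf : ∀ i ∈ s, ContDiff ℝ (⊤:ℕ∞) (f i)) (v : F) :
    pdv v (fun p => ∑ i ∈ s, f i p) = fun p => ∑ i ∈ s, pdv v (f i) p := by
  classical
  induction s using Finset.induction_on with
  | empty => funext p; simp [pdv]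
  | @insert a s hx ih =>
    have h1 : ContDiff ℝ (⊤:ℕ∞) (f a) := hf a (mem_insert_self a s)
    have h2 : ∀ i ∈ s, ContDiff ℝ (⊤:ℕ∞) (f i) := fun i hi => hf i (mem_insert_of_mem hi)
    have hsum : ContDiff ℝ (⊤:ℕ∞) (fun p => ∑ i ∈ s, f i p) := ContDiff.sum h2
    simp only [Finset.sum_insert hx]
    rw [pdv_add h1 hsum v, ih h2]

theorem pascal_sum (A B : ℕ → ℂ) (M : ℕ) :
    ∑ j ∈ Finset.range (M+1), (M.choose j : ℂ) * (A (j+1) * B (M-j) + A j * B (M-j+1))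
      = ∑ j ∈ Finset.range (M+2), ((M+1).choose j : ℂ) * (A j * B (M+1-j)) := by
  rw [Finset.sum_range_succ' (fun j => ((M+1).choose j : ℂ) * (A j * B (M+1-j))) (M+1)]
  simp only [Nat.choose_succ_succ, Nat.cast_add, Nat.choose_zero_right, Nat.cast_one,
    Nat.succ_sub_succ_eq_sub, Nat.sub_zero, one_mul]
  have e2 : ∑ j ∈ Finset.range (M+1), (M.choose (j+1) : ℂ) * (A (j+1) * B (M-j)) + A 0 * B (M+1)
      = ∑ j ∈ Finset.range (M+1), (M.choose j : ℂ) * (A j * B (M-j+1)) := by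
    rw [Finset.sum_range_succ (fun j => (M.choose (j+1) : ℂ) * (A (j+1) * B (M-j))) M,
      Finset.sum_range_succ' (fun j => (M.choose j : ℂ) * (A j * B (M-j+1))) M]
    simp only [Nat.choose_succ_self, Nat.cast_zero, zero_mul, add_zero, Nat.choose_zero_right,
      Nat.cast_one, one_mul, Nat.sub_zero, Nat.sub_self]
    congr 1
    apply Finset.sum_congr rfl
    intro j hj
    have hjM : j < M := Finset.mem_range.mp hj
    have : M - (j+1) + 1 = M - j := by omega
    rw [this]
  calc ∑ j ∈ Finset.range (M+1), (M.choose j : ℂ) * (A (j+1) * B (M-j) + A j * B (M-j+1))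
      = ∑ j ∈ Finset.range (M+1), (M.choose j : ℂ) * (A (j+1) * B (M-j))
        + (∑ j ∈ Finset.range (M+1), (M.choose (j+1) : ℂ) * (A (j+1) * B (M-j)) + A 0 * B (M+1)) := by
        rw [e2, ← Finset.sum_add_distrib]; apply Finset.sum_congr rfl; intro j _; ring
    _ = _ := by
        rw [← add_assoc, ← Finset.sum_add_distrib]
        have : ∀ j ∈ Finset.range (M+1),
            (M.choose j : ℂ) * (A (j+1) * B (M-j)) + (M.choose (j+1) : ℂ) * (A (j+1) * B (M-j))
            = ((M.choose j : ℂ) + (M.choose (j+1) : ℂ)) * (A (j+1) * B (M-j)) := by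
          intro j _; ring
        rw [Finset.sum_congr rfl this]

/-- Leibniz rule for iterated directional derivative. -/
theorem pdv_iter_mul {f g : F → ℂ} (hf : ContDiff ℝ (⊤:ℕ∞) f) (hg : ContDiff ℝ (⊤:ℕ∞) g)
    (v : F) (N : ℕ) :
    (pdv v)^[N] (fun p => f p * g p) =
      fun p => ∑ j ∈ Finset.range (N+1),
        (N.choose j : ℂ) * ((pdv v)^[j] f p * (pdv v)^[N-j] g p) := by
  induction N with
  | zero => funext p; simp
  | succ N ih =>
    rw [Function.iterate_succ_apply', ih]
    have hterm : ∀ j ∈ Finset.range (N+1), ContDiff ℝ (⊤:ℕ∞)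
        (fun p => (N.choose j : ℂ) * ((pdv v)^[j] f p * (pdv v)^[N-j] g p)) := by
      intro j _
      exact (contDiff_const.mul ((smooth_pdv_iter hf v j).mul (smooth_pdv_iter hg v (N-j))))
    rw [pdv_sum (Finset.range (N+1)) hterm v]
    funext p
    have step : ∀ j, pdv v (fun p => (N.choose j : ℂ) * ((pdv v)^[j] f p * (pdv v)^[N-j] g p)) p
        = (N.choose j : ℂ) * ((pdv v)^[j+1] f p * (pdv v)^[N-j] g p
            + (pdv v)^[j] f p * (pdv v)^[N-j+1] g p) := by
      intro j
      rw [pdv_const_mul ((smooth_pdv_iter hf v j).mul (smooth_pdv_iter hg v (N-j))) _ v,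
        pdv_mul (smooth_pdv_iter hf v j) (smooth_pdv_iter hg v (N-j)) v]
      simp [Function.iterate_succ_apply']
    simp only [step]
    exact pascal_sum (fun j => (pdv v)^[j] f p) (fun j => (pdv v)^[j] g p) N

theorem pdv_iter_const_mul {f : F → ℂ} (hf : ContDiff ℝ (⊤:ℕ∞) f) (c : ℂ) (v : F) (N : ℕ) :
    (pdv v)^[N] (fun p => c * f p) = fun p => c * (pdv v)^[N] f p := by
  induction N generalizing f with
  | zero => rfl
  | succ N ih =>
    rw [Function.iterate_succ_apply, pdv_const_mul hf c v, ih (smooth_pdv hf v),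
      Function.iterate_succ_apply]

theorem pdv_iter_sum {ι : Type*} (s : Finset ι) {f : ι → F → E}
    (hf : ∀ i ∈ s, ContDiff ℝ (⊤:ℕ∞) (f i)) (v : F) (N : ℕ) :
    (pdv v)^[N] (fun p => ∑ i ∈ s, f i p) = fun p => ∑ i ∈ s, (pdv v)^[N] (f i) p := by
  induction N generalizing f with
  | zero => rfl
  | succ N ih =>
    rw [Function.iterate_succ_apply, pdv_sum s hf v,
      ih (fun i hi => smooth_pdv (hf i hi) v)]
    funext p
    simp [Function.iterate_succ_apply]

/-- The multi-index directional derivative. -/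
def MDv {d : ℕ} (w : Fin d → F) (α : Fin d → ℕ) (f : F → E) : F → E :=
  (List.finRange d).foldr (fun i g => (pdv (w i))^[α i] g) f

theorem MDv_succ {d : ℕ} (w : Fin (d+1) → F) (α : Fin (d+1) → ℕ) (f : F → E) :
    MDv w α f = (pdv (w 0))^[α 0] (MDv (w ∘ Fin.succ) (α ∘ Fin.succ) f) := by
  simp only [MDv, List.finRange_succ, List.foldr_cons, List.foldr_map]
  rfl

theorem smooth_MDv {d : ℕ} (w : Fin d → F) (α : Fin d → ℕ) {f : F → E}
    (hf : ContDiff ℝ (⊤:ℕ∞) f) : ContDiff ℝ (⊤:ℕ∞) (MDv w α f) := by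
  induction d generalizing f with
  | zero => exact hf
  | succ d ih =>
    rw [MDv_succ]
    exact smooth_pdv_iter (ih _ _ hf) _ _

theorem MDv_const_mul {d : ℕ} (w : Fin d → F) (α : Fin d → ℕ) {f : F → ℂ}
    (hf : ContDiff ℝ (⊤:ℕ∞) f) (c : ℂ) :
    MDv w α (fun p => c * f p) = fun p => c * MDv w α f p := by
  induction d generalizing f with
  | zero => rfl
  | succ d ih =>
    rw [MDv_succ, ih _ _ hf, pdv_iter_const_mul (smooth_MDv _ _ hf) c _ _, MDv_succ]

theorem MDv_sum {d : ℕ} (w : Fin d → F) (α : Fin d → ℕ) {ι : Type*} (s : Finset ι)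
    {f : ι → F → E} (hf : ∀ i ∈ s, ContDiff ℝ (⊤:ℕ∞) (f i)) :
    MDv w α (fun p => ∑ i ∈ s, f i p) = fun p => ∑ i ∈ s, MDv w α (f i) p := by
  induction d generalizing f with
  | zero => rfl
  | succ d ih =>
    rw [MDv_succ, ih _ _ hf, pdv_iter_sum s (fun i hi => smooth_MDv _ _ (hf i hi)) _ _]
    funext p
    apply Finset.sum_congr rfl
    intro i hi
    rw [MDv_succ]

theorem cons_mem_Iic_iff {d : ℕ} {α : Fin (d+1) → ℕ} {j : ℕ} {γ' : Fin d → ℕ} :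
    Fin.cons j γ' ≤ α ↔ j ≤ α 0 ∧ γ' ≤ α ∘ Fin.succ := by
  constructor
  · intro hle
    refine ⟨hle 0, fun i => ?_⟩
    simpa using hle i.succ
  · intro ⟨h0, hsucc⟩ i
    induction i using Fin.cases with
    | zero => simpa using h0
    | succ i => simpa using hsucc i

theorem sum_Iic_fin_succ {d : ℕ} (α : Fin (d+1) → ℕ) {M : Type*} [AddCommMonoid M]
    (F : (Fin (d+1) → ℕ) → M) :
    ∑ γ ∈ Finset.Iic α, F γ =
      ∑ j ∈ Finset.range (α 0 + 1), ∑ γ' ∈ Finset.Iic (α ∘ Fin.succ), F (Fin.cons j γ') := by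
  rw [← Finset.sum_product']
  apply Finset.sum_nbij' (i := fun γ => ((γ 0 : ℕ), γ ∘ Fin.succ))
    (j := fun q => Fin.cons q.1 q.2)
  · intro γ hγ
    have hle : γ ≤ α := Finset.mem_Iic.mp hγ
    refine Finset.mem_product.mpr ⟨Finset.mem_range.mpr (Nat.lt_succ_of_le (hle 0)), ?_⟩
    exact Finset.mem_Iic.mpr (fun i => hle i.succ)
  · intro q hq
    obtain ⟨h1, h2⟩ := Finset.mem_product.mp hq
    exact Finset.mem_Iic.mpr (cons_mem_Iic_iff.mpr
      ⟨Nat.lt_succ_iff.mp (Finset.mem_range.mp h1), Finset.mem_Iic.mp h2⟩)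
  · intro γ _
    exact Fin.cons_self_tail γ
  · intro q _
    refine Prod.ext rfl ?_
    funext i
    simp
  · intro γ _
    congr 1
    exact (Fin.cons_self_tail γ).symm

theorem sub_cons {d : ℕ} (α : Fin (d+1) → ℕ) (j : ℕ) (γ' : Fin d → ℕ) :
    α - Fin.cons j γ' = Fin.cons (α 0 - j) (α ∘ Fin.succ - γ') := by
  funext i
  induction i using Fin.cases with
  | zero => simp [Pi.sub_apply]
  | succ i => simp [Pi.sub_apply]

theorem cons_comp_succ {d : ℕ} (j : ℕ) (γ' : Fin d → ℕ) :
    (Fin.cons j γ' : Fin (d+1) → ℕ) ∘ Fin.succ = γ' := by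
  funext i; simp

/-- Multi-index Leibniz rule. -/
theorem MDv_mul : ∀ {d : ℕ} (w : Fin d → F) (α : Fin d → ℕ) {f g : F → ℂ},
    ContDiff ℝ (⊤:ℕ∞) f → ContDiff ℝ (⊤:ℕ∞) g →
    MDv w α (fun p => f p * g p) =
      fun p => ∑ γ ∈ Finset.Iic α,
        ((∏ i, (α i).choose (γ i) : ℕ) : ℂ) * (MDv w γ f p * MDv w (α - γ) g p)
  | 0, w, α, f, g, hf, hg => by
    have hIic : Finset.Iic α = {α} := by
      ext γ; simp [Finset.mem_Iic, Subsingleton.elim γ α, le_refl]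
    funext p
    simp [MDv, hIic]
  | (d+1), w, α, f, g, hf, hg => by
    have hsummand : ∀ γ' ∈ Finset.Iic (α ∘ Fin.succ), ContDiff ℝ (⊤:ℕ∞)
        (fun p => ((∏ i, ((α ∘ Fin.succ) i).choose (γ' i) : ℕ) : ℂ) *
          (MDv (w ∘ Fin.succ) γ' f p * MDv (w ∘ Fin.succ) (α ∘ Fin.succ - γ') g p)) :=
      fun γ' _ => contDiff_const.mul ((smooth_MDv _ _ hf).mul (smooth_MDv _ _ hg))
    rw [MDv_succ, MDv_mul (w ∘ Fin.succ) (α ∘ Fin.succ) hf hg,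
      pdv_iter_sum _ hsummand (w 0) (α 0)]
    funext p
    rw [sum_Iic_fin_succ α]
    rw [Finset.sum_congr rfl (fun γ' hγ' => by
      rw [pdv_iter_const_mul ((smooth_MDv _ _ hf).mul (smooth_MDv _ _ hg)) _ _ _,
        pdv_iter_mul (smooth_MDv _ _ hf) (smooth_MDv _ _ hg) (w 0) (α 0)] :
      ∀ γ' ∈ Finset.Iic (α ∘ Fin.succ), _ = _)]
    rw [Finset.sum_comm]
    apply Finset.sum_congr rfl
    intro j hj
    simp only []
    rw [Finset.mul_sum]
    apply Finset.sum_congr rfl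
    intro j1 _
    rw [MDv_succ w (Fin.cons j1 j) f, sub_cons α j1 j,
      MDv_succ w (Fin.cons (α 0 - j1) (α ∘ Fin.succ - j)) g, Fin.prod_univ_succ]
    simp only [Fin.cons_zero, Fin.cons_succ, cons_comp_succ, Function.comp_apply]
    push_cast
    ring

end Aux

section Bridge
open Function Finset

theorem mdx_eq_MDv (α : Fin n → ℕ) (f : (Fin n → ℝ) × (Fin m → ℝ) → E) :
    mdx α f = MDv (fun i => ((Pi.single i 1 : Fin n → ℝ), (0 : Fin m → ℝ))) α f := rfl

theorem mdy_eq_MDv (β : Fin m → ℕ) (f : (Fin n → ℝ) × (Fin m → ℝ) → E) :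
    mdy β f = MDv (fun j => ((0 : Fin n → ℝ), (Pi.single j 1 : Fin m → ℝ))) β f := rfl

theorem mdxy_mul_eq {a a' : (Fin n → ℝ) × (Fin m → ℝ) → ℂ}
    (ha : ContDiff ℝ (⊤:ℕ∞) a) (ha' : ContDiff ℝ (⊤:ℕ∞) a')
    (α : Fin n → ℕ) (β : Fin m → ℕ) :
    mdx α (mdy β (fun q => a q * a' q)) = fun p =>
      ∑ δ ∈ Finset.Iic β, ∑ γ ∈ Finset.Iic α,
        (((∏ j, (β j).choose (δ j) : ℕ) : ℂ) * ((∏ i, (α i).choose (γ i) : ℕ) : ℂ)) *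
          (mdx γ (mdy δ a) p * mdx (α - γ) (mdy (β - δ) a') p) := by
  rw [mdy_eq_MDv, MDv_mul _ β ha ha', mdx_eq_MDv, MDv_sum _ α (Finset.Iic β)
    (fun δ _ => contDiff_const.mul ((smooth_MDv _ _ ha).mul (smooth_MDv _ _ ha')))]
  funext p
  apply Finset.sum_congr rfl
  intro δ _
  rw [MDv_const_mul _ α ((smooth_MDv _ _ ha).mul (smooth_MDv _ _ ha')),
    MDv_mul _ α (smooth_MDv _ _ ha) (smooth_MDv _ _ ha')]
  simp only [mdy_eq_MDv, mdx_eq_MDv]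
  rw [Finset.mul_sum]
  apply Finset.sum_congr rfl
  intro γ _
  ring

theorem mdxy_mul_bound {a a' : (Fin n → ℝ) × (Fin m → ℝ) → ℂ}
    (ha : ContDiff ℝ (⊤:ℕ∞) a) (ha' : ContDiff ℝ (⊤:ℕ∞) a')
    (α : Fin n → ℕ) (β : Fin m → ℕ) (p : (Fin n → ℝ) × (Fin m → ℝ)) :
    ‖mdx α (mdy β (fun q => a q * a' q)) p‖ ≤
      ∑ γ ∈ Finset.Iic α, ∑ δ ∈ Finset.Iic β,
        (((∏ i, (α i).choose (γ i)) * (∏ j, (β j).choose (δ j)) : ℕ) : ℝ) *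
          (‖mdx γ (mdy δ a) p‖ * ‖mdx (α - γ) (mdy (β - δ) a') p‖) := by
  rw [mdxy_mul_eq ha ha' α β]
  simp only []
  refine le_trans (norm_sum_le _ _) ?_
  refine le_trans (Finset.sum_le_sum (fun δ _ => norm_sum_le _ _)) ?_
  rw [Finset.sum_comm]
  apply Finset.sum_le_sum
  intro γ _
  apply Finset.sum_le_sum
  intro δ _
  apply le_of_eq
  rw [norm_mul, norm_mul, norm_mul, Complex.norm_natCast, Complex.norm_natCast]
  push_cast
  ring

end Bridge

section Combinatorics
open Finset

theorem msize_add_sub {d : ℕ} {γ α : Fin d → ℕ} (h : γ ≤ α) :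
    msize γ + msize (α - γ) = msize α := by
  unfold msize
  rw [← Finset.sum_add_distrib]
  exact Finset.sum_congr rfl fun i _ => Nat.add_sub_cancel' (h i)

theorem one_le_mfact {d : ℕ} (α : Fin d → ℕ) : 1 ≤ mfact α :=
  Finset.one_le_prod' fun i _ => Nat.one_le_iff_ne_zero.mpr (Nat.factorial_ne_zero _)

theorem choose_mul_mfact_mul_mfact {d : ℕ} {γ α : Fin d → ℕ} (h : γ ≤ α) :
    (∏ i, (α i).choose (γ i)) * (mfact γ * mfact (α - γ)) = mfact α := by
  unfold mfact
  rw [← Finset.prod_mul_distrib, ← Finset.prod_mul_distrib]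
  exact Finset.prod_congr rfl fun i _ => by
    have := Nat.choose_mul_factorial_mul_factorial (h i)
    simpa [Pi.sub_apply, mul_assoc] using this

open Classical in
theorem tsum_Iic_mul {d : ℕ} (f g : (Fin d → ℕ) → ℝ≥0∞) :
    ∑' μ, ∑ ν ∈ Finset.Iic μ, f ν * g (μ - ν) = (∑' ν, f ν) * (∑' ν, g ν) := by
  classical
  have h1 : ∀ μ : Fin d → ℕ, ∑ ν ∈ Finset.Iic μ, f ν * g (μ - ν)
      = ∑' ν, (if ν ≤ μ then f ν * g (μ - ν) else 0) := by
    intro μ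
    rw [tsum_eq_sum (s := Finset.Iic μ) (fun ν hν => if_neg (fun hle => hν (Finset.mem_Iic.mpr hle)))]
    exact Finset.sum_congr rfl fun ν hν => (if_pos (Finset.mem_Iic.mp hν)).symm
  simp only [h1]
  rw [ENNReal.tsum_comm]
  have h2 : ∀ ν : Fin d → ℕ, ∑' μ, (if ν ≤ μ then f ν * g (μ - ν) else 0)
      = f ν * ∑' ρ, g ρ := by
    intro ν
    have : ∀ μ : Fin d → ℕ, (if ν ≤ μ then f ν * g (μ - ν) else 0)
        = f ν * (if ν ≤ μ then g (μ - ν) else 0) := by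
      intro μ; split <;> simp
    simp only [this]
    rw [ENNReal.tsum_mul_left]
    congr 1
    have hinj : Function.Injective (fun ρ : Fin d → ℕ => ν + ρ) :=
      fun x y hxy => by simpa using add_right_injective ν hxy
    rw [← Function.Injective.tsum_eq (f := fun μ => if ν ≤ μ then g (μ - ν) else 0) hinj ?_]
    · apply tsum_congr
      intro ρ
      rw [if_pos le_self_add, add_tsub_cancel_left]
    · intro μ hμ
      simp only [Function.mem_support, ne_eq] at hμ
      have hle : ν ≤ μ := by by_contra hc; exact hμ (if_neg hc)
      exact ⟨μ - ν, by simp [add_tsub_cancel_of_le hle]⟩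
  simp only [h2]
  rw [ENNReal.tsum_mul_right]

/-- The elementary per-term inequality. -/
theorem term_ineq {dx dy : ℕ} {s : ℝ} (hs : 1 < s) {h T W : ℝ} (hh0 : 0 < h) (hT : 0 < T)
    (hW : 0 < W) (m k m' k' : ℝ) {α γ : Fin dx → ℕ} {β δ : Fin dy → ℕ}
    (hγ : γ ≤ α) (hδ : δ ≤ β) {x y : ℝ} (hx : 0 ≤ x) (hy : 0 ≤ y) :
    (((∏ i, (α i).choose (γ i)) * (∏ j, (β j).choose (δ j)) : ℕ) : ℝ) * (x * y) *
      (T ^ (msize α + msize β) * h ^ (m+m') * W ^ ((msize β : ℝ) - (k+k')) /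
        ((mfact α * mfact β : ℕ) : ℝ) ^ s)
    ≤ (x * T ^ (msize γ + msize δ) * h ^ m * W ^ ((msize δ : ℝ) - k) /
        ((mfact γ * mfact δ : ℕ) : ℝ) ^ s) *
      (y * T ^ (msize (α-γ) + msize (β-δ)) * h ^ m' * W ^ ((msize (β-δ) : ℝ) - k') /
        ((mfact (α-γ) * mfact (β-δ) : ℕ) : ℝ) ^ s) := by
  set CN : ℕ := (∏ i, (α i).choose (γ i)) * (∏ j, (β j).choose (δ j)) with hCN
  set D1 : ℕ := mfact γ * mfact δ with hD1
  set D2 : ℕ := mfact (α-γ) * mfact (β-δ) with hD2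
  have hMeq : mfact α * mfact β = CN * (D1 * D2) := by
    rw [← choose_mul_mfact_mul_mfact hγ, ← choose_mul_mfact_mul_mfact hδ, hCN, hD1, hD2]
    ring
  have hCN1 : (1:ℝ) ≤ (CN : ℝ) := by
    have : 0 < CN := Nat.mul_pos (Finset.prod_pos fun i _ => Nat.choose_pos (hγ i))
      (Finset.prod_pos fun j _ => Nat.choose_pos (hδ j))
    exact_mod_cast this
  have hD1pos : (0:ℝ) < (D1 : ℝ) := by
    have : 0 < D1 := Nat.mul_pos (one_le_mfact _) (one_le_mfact _)
    exact_mod_cast this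
  have hD2pos : (0:ℝ) < (D2 : ℝ) := by
    have : 0 < D2 := Nat.mul_pos (one_le_mfact _) (one_le_mfact _)
    exact_mod_cast this
  have hMpos : (0:ℝ) < ((mfact α * mfact β : ℕ) : ℝ) := by
    have : 0 < mfact α * mfact β := Nat.mul_pos (one_le_mfact _) (one_le_mfact _)
    exact_mod_cast this
  have frac : ((CN : ℕ) : ℝ) / ((mfact α * mfact β : ℕ) : ℝ) ^ s
      ≤ 1 / (((D1 : ℕ) : ℝ) ^ s * ((D2 : ℕ) : ℝ) ^ s) := by
    rw [div_le_div_iff₀ (Real.rpow_pos_of_pos hMpos s)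
      (mul_pos (Real.rpow_pos_of_pos hD1pos s) (Real.rpow_pos_of_pos hD2pos s))]
    have hexp : ((mfact α * mfact β : ℕ) : ℝ) ^ s
        = (CN : ℝ) ^ s * (((D1:ℕ):ℝ) ^ s * ((D2:ℕ):ℝ) ^ s) := by
      rw [hMeq]
      push_cast
      rw [Real.mul_rpow (by positivity) (by positivity),
        Real.mul_rpow (by positivity) (by positivity)]
    rw [hexp, one_mul]
    have hCNs : (CN : ℝ) ≤ (CN : ℝ) ^ s := by
      nth_rewrite 1 [← Real.rpow_one (CN : ℝ)]
      exact Real.rpow_le_rpow_of_exponent_le hCN1 hs.le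
    calc (CN:ℝ) * (((D1:ℕ):ℝ) ^ s * ((D2:ℕ):ℝ) ^ s)
        ≤ (CN:ℝ) ^ s * (((D1:ℕ):ℝ) ^ s * ((D2:ℕ):ℝ) ^ s) := by
          apply mul_le_mul_of_nonneg_right hCNs (by positivity)
      _ = _ := rfl
  have hT1 : T ^ (msize γ + msize δ) * T ^ (msize (α-γ) + msize (β-δ))
      = T ^ (msize α + msize β) := by
    rw [← pow_add]
    congr 1
    have h1 := msize_add_sub hγ
    have h2 := msize_add_sub hδ
    omega
  have hh2 : h ^ m * h ^ m' = h ^ (m + m') := (Real.rpow_add hh0 m m').symm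
  have hW2 : W ^ ((msize δ : ℝ) - k) * W ^ ((msize (β-δ) : ℝ) - k')
      = W ^ ((msize β : ℝ) - (k + k')) := by
    rw [← Real.rpow_add hW]
    congr 1
    have h2 := msize_add_sub hδ
    have : (msize δ : ℝ) + (msize (β-δ) : ℝ) = (msize β : ℝ) := by exact_mod_cast congrArg Nat.cast h2
    linarith
  have hX : (0:ℝ) ≤ x * y * T ^ (msize α + msize β) * h ^ (m+m') * W ^ ((msize β : ℝ) - (k+k')) := by
    positivity
  calc ((CN : ℕ) : ℝ) * (x * y) *
      (T ^ (msize α + msize β) * h ^ (m+m') * W ^ ((msize β : ℝ) - (k+k')) /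
        ((mfact α * mfact β : ℕ) : ℝ) ^ s)
      = (x * y * T ^ (msize α + msize β) * h ^ (m+m') * W ^ ((msize β : ℝ) - (k+k'))) *
        (((CN : ℕ) : ℝ) / ((mfact α * mfact β : ℕ) : ℝ) ^ s) := by ring
    _ ≤ (x * y * T ^ (msize α + msize β) * h ^ (m+m') * W ^ ((msize β : ℝ) - (k+k'))) *
        (1 / (((D1 : ℕ) : ℝ) ^ s * ((D2 : ℕ) : ℝ) ^ s)) := by
        exact mul_le_mul_of_nonneg_left frac hX
    _ = _ := by
        rw [← hT1, ← hh2, ← hW2]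
        ring

end Combinatorics

/-- **Submultiplicativity of Gevrey quasi-norms** (inequality (3.25)):
`N̄_{m+m',k+k'}(a·a',T) ≤ N̄_{m,k}(a,T) · N̄_{m',k'}(a',T)`. -/
theorem qnorm_submul
    (s : ℝ) (hs : 1 < s) (h : ℝ) (hh : h ∈ Set.Ioc (0:ℝ) 1)
    (T : ℝ) (hT : 0 < T) (n : ℕ) (hn : 2 ≤ n)
    (m k m' k' : ℝ)
    (a a' : (Fin n → ℝ) × (Fin (n-1) → ℝ) → ℂ)
    (ha : ContDiff ℝ (⊤ : ℕ∞) a) (ha' : ContDiff ℝ (⊤ : ℕ∞) a') :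
    qnorm n s h T (m + m') (k + k') (fun p => a p * a' p) ≤
      qnorm n s h T m k a * qnorm n s h T m' k' a' := by
  classical
  obtain ⟨hh0, _⟩ := hh
  unfold qnorm
  refine iSup_le fun p => le_trans ?_ (mul_le_mul' (le_iSup _ p) (le_iSup _ p))
  have hWpos : (0:ℝ) < Real.sqrt (1 + ∑ i, (p.2 i)^2) := Real.sqrt_pos.mpr (by positivity)
  set W := Real.sqrt (1 + ∑ i, (p.2 i)^2) with hWdef
  set U : (Fin n → ℕ) → (Fin (n-1) → ℕ) → ℝ≥0∞ := fun γ δ =>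
    ENNReal.ofReal (‖mdx γ (mdy δ a) p‖ * T ^ (msize γ + msize δ) * h ^ m *
      W ^ ((msize δ : ℝ) - k) / ((mfact γ * mfact δ : ℕ) : ℝ) ^ s) with hU
  set U' : (Fin n → ℕ) → (Fin (n-1) → ℕ) → ℝ≥0∞ := fun γ δ =>
    ENNReal.ofReal (‖mdx γ (mdy δ a') p‖ * T ^ (msize γ + msize δ) * h ^ m' *
      W ^ ((msize δ : ℝ) - k') / ((mfact γ * mfact δ : ℕ) : ℝ) ^ s) with hU'
  have key : ∀ (α : Fin n → ℕ) (β : Fin (n-1) → ℕ),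
      ENNReal.ofReal (‖mdx α (mdy β (fun q => a q * a' q)) p‖ * T ^ (msize α + msize β) *
        h ^ (m+m') * W ^ ((msize β : ℝ) - (k+k')) / ((mfact α * mfact β : ℕ) : ℝ) ^ s)
      ≤ ∑ γ ∈ Finset.Iic α, ∑ δ ∈ Finset.Iic β, U γ δ * U' (α - γ) (β - δ) := by
    intro α β
    have hreal : ‖mdx α (mdy β (fun q => a q * a' q)) p‖ * T ^ (msize α + msize β) *
        h ^ (m+m') * W ^ ((msize β : ℝ) - (k+k')) / ((mfact α * mfact β : ℕ) : ℝ) ^ s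
        ≤ ∑ γ ∈ Finset.Iic α, ∑ δ ∈ Finset.Iic β,
          (‖mdx γ (mdy δ a) p‖ * T ^ (msize γ + msize δ) * h ^ m * W ^ ((msize δ : ℝ) - k) /
            ((mfact γ * mfact δ : ℕ) : ℝ) ^ s) *
          (‖mdx (α-γ) (mdy (β-δ) a') p‖ * T ^ (msize (α-γ) + msize (β-δ)) * h ^ m' *
            W ^ ((msize (β-δ) : ℝ) - k') / ((mfact (α-γ) * mfact (β-δ) : ℕ) : ℝ) ^ s) := by
      have hc : (0:ℝ) ≤ T ^ (msize α + msize β) * h ^ (m+m') * W ^ ((msize β : ℝ) - (k+k')) /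
          ((mfact α * mfact β : ℕ) : ℝ) ^ s := by
        have : (0:ℝ) < ((mfact α * mfact β : ℕ) : ℝ) := by
          have : 0 < mfact α * mfact β := Nat.mul_pos (one_le_mfact _) (one_le_mfact _)
          exact_mod_cast this
        positivity
      calc ‖mdx α (mdy β (fun q => a q * a' q)) p‖ * T ^ (msize α + msize β) *
          h ^ (m+m') * W ^ ((msize β : ℝ) - (k+k')) / ((mfact α * mfact β : ℕ) : ℝ) ^ s
          = ‖mdx α (mdy β (fun q => a q * a' q)) p‖ *
            (T ^ (msize α + msize β) * h ^ (m+m') * W ^ ((msize β : ℝ) - (k+k')) /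
              ((mfact α * mfact β : ℕ) : ℝ) ^ s) := by ring
        _ ≤ (∑ γ ∈ Finset.Iic α, ∑ δ ∈ Finset.Iic β,
              (((∏ i, (α i).choose (γ i)) * (∏ j, (β j).choose (δ j)) : ℕ) : ℝ) *
                (‖mdx γ (mdy δ a) p‖ * ‖mdx (α - γ) (mdy (β - δ) a') p‖)) *
            (T ^ (msize α + msize β) * h ^ (m+m') * W ^ ((msize β : ℝ) - (k+k')) /
              ((mfact α * mfact β : ℕ) : ℝ) ^ s) :=
            mul_le_mul_of_nonneg_right (mdxy_mul_bound ha ha' α β p) hc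
        _ = ∑ γ ∈ Finset.Iic α, ∑ δ ∈ Finset.Iic β,
              (((∏ i, (α i).choose (γ i)) * (∏ j, (β j).choose (δ j)) : ℕ) : ℝ) *
                (‖mdx γ (mdy δ a) p‖ * ‖mdx (α - γ) (mdy (β - δ) a') p‖) *
              (T ^ (msize α + msize β) * h ^ (m+m') * W ^ ((msize β : ℝ) - (k+k')) /
                ((mfact α * mfact β : ℕ) : ℝ) ^ s) := by
            rw [Finset.sum_mul]
            exact Finset.sum_congr rfl fun γ _ => by rw [Finset.sum_mul]
        _ ≤ _ := by
            apply Finset.sum_le_sum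
            intro γ hγ
            apply Finset.sum_le_sum
            intro δ hδ
            exact term_ineq hs hh0 hT hWpos m k m' k'
              (Finset.mem_Iic.mp hγ) (Finset.mem_Iic.mp hδ) (norm_nonneg _) (norm_nonneg _)
    refine le_trans (ENNReal.ofReal_le_ofReal hreal) (le_of_eq ?_)
    rw [ENNReal.ofReal_sum_of_nonneg (fun γ _ => Finset.sum_nonneg fun δ _ => by positivity)]
    refine Finset.sum_congr rfl fun γ _ => ?_
    rw [ENNReal.ofReal_sum_of_nonneg (fun δ _ => by positivity)]
    refine Finset.sum_congr rfl fun δ _ => ?_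
    rw [ENNReal.ofReal_mul (by positivity)]
  calc ∑' (α : Fin n → ℕ) (β : Fin (n-1) → ℕ),
      ENNReal.ofReal (‖mdx α (mdy β (fun q => a q * a' q)) p‖ * T ^ (msize α + msize β) *
        h ^ (m+m') * W ^ ((msize β : ℝ) - (k+k')) / ((mfact α * mfact β : ℕ) : ℝ) ^ s)
      ≤ ∑' (α : Fin n → ℕ) (β : Fin (n-1) → ℕ),
          ∑ γ ∈ Finset.Iic α, ∑ δ ∈ Finset.Iic β, U γ δ * U' (α - γ) (β - δ) :=
        ENNReal.tsum_le_tsum fun α => ENNReal.tsum_le_tsum fun β => key α β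
    _ = ∑' (α : Fin n → ℕ), ∑ γ ∈ Finset.Iic α,
          (∑' δ, U γ δ) * (∑' δ, U' (α - γ) δ) := by
        refine tsum_congr fun α => ?_
        rw [Summable.tsum_finsetSum (fun γ _ => ENNReal.summable)]
        exact Finset.sum_congr rfl fun γ _ => tsum_Iic_mul (U γ) (U' (α - γ))
    _ = (∑' γ, ∑' δ, U γ δ) * (∑' γ, ∑' δ, U' γ δ) :=
        tsum_Iic_mul (fun γ => ∑' δ, U γ δ) (fun γ => ∑' δ, U' γ δ)
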